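/- The 5×5 differential-algebraic system with constraints v_{−2} − v_0 = 0 and v_2 − v_0 = 0, and ODEs dv_i/dt = (c/2 + d)v_{i−1} − 2d v_i + (−c/2 + d)v_{i+1} for i = −1, 0, 1, has exactly the eigenvalues 0, −2d, −4d (each simple), with corresponding eigenvectors (1,1,1,1,1), (0, c/2 − d, 0, c/2 + d, 0), and (1,−1,1,−1,1). -/

import Mathlib

/-- Generalized eigenpairs of the 5×5 differential-algebraic element system:
indices `0,…,4` of `Fin 5` correspond to `v_{-2},…,v_2`.  A pair `(λ, v)` with
`v ≠ 0` satisfies the constraints `v_{-2} = v_0`, `v_2 = v_0` and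
`λ v_i = (c/2+d) v_{i-1} − 2d v_i + (−c/2+d) v_{i+1}` for `i = -1,0,1`.
The eigenvalues are exactly `0, −2d, −4d`; each is simple, with the stated
eigenvectors. -/
theorem stmt5 (c d : ℝ) (hd : 0 < d) :
    -- characterisation of the eigenvalues
    (∀ lam : ℝ,
      (∃ v : Fin 5 → ℝ, v ≠ 0 ∧ v 0 = v 2 ∧ v 4 = v 2 ∧
        lam * v 1 = (c / 2 + d) * v 0 - 2 * d * v 1 + (-c / 2 + d) * v 2 ∧
        lam * v 2 = (c / 2 + d) * v 1 - 2 * d * v 2 + (-c / 2 + d) * v 3 ∧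
        lam * v 3 = (c / 2 + d) * v 2 - 2 * d * v 3 + (-c / 2 + d) * v 4)
      ↔ lam = 0 ∨ lam = -2 * d ∨ lam = -4 * d) ∧
    -- the stated eigenvectors (nonzero and satisfying constraints and ODEs)
    (∀ (lam : ℝ) (e : Fin 5 → ℝ),
      ((lam = 0 ∧ e = ![1, 1, 1, 1, 1]) ∨
       (lam = -2 * d ∧ e = ![0, c / 2 - d, 0, c / 2 + d, 0]) ∨
       (lam = -4 * d ∧ e = ![1, -1, 1, -1, 1])) →
      e ≠ 0 ∧ e 0 = e 2 ∧ e 4 = e 2 ∧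
        lam * e 1 = (c / 2 + d) * e 0 - 2 * d * e 1 + (-c / 2 + d) * e 2 ∧
        lam * e 2 = (c / 2 + d) * e 1 - 2 * d * e 2 + (-c / 2 + d) * e 3 ∧
        lam * e 3 = (c / 2 + d) * e 2 - 2 * d * e 3 + (-c / 2 + d) * e 4) ∧
    -- simplicity: every eigenvector is a scalar multiple of the stated one
    (∀ (lam : ℝ) (e : Fin 5 → ℝ) (v : Fin 5 → ℝ),
      ((lam = 0 ∧ e = ![1, 1, 1, 1, 1]) ∨
       (lam = -2 * d ∧ e = ![0, c / 2 - d, 0, c / 2 + d, 0]) ∨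
       (lam = -4 * d ∧ e = ![1, -1, 1, -1, 1])) →
      (v 0 = v 2 ∧ v 4 = v 2 ∧
        lam * v 1 = (c / 2 + d) * v 0 - 2 * d * v 1 + (-c / 2 + d) * v 2 ∧
        lam * v 2 = (c / 2 + d) * v 1 - 2 * d * v 2 + (-c / 2 + d) * v 3 ∧
        lam * v 3 = (c / 2 + d) * v 2 - 2 * d * v 3 + (-c / 2 + d) * v 4) →
      ∃ a : ℝ, v = a • e) := by
  have hd' : (2:ℝ) * d ≠ 0 := by positivity
  have hpart2 : ∀ (lam : ℝ) (e : Fin 5 → ℝ),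
      ((lam = 0 ∧ e = ![1, 1, 1, 1, 1]) ∨
       (lam = -2 * d ∧ e = ![0, c / 2 - d, 0, c / 2 + d, 0]) ∨
       (lam = -4 * d ∧ e = ![1, -1, 1, -1, 1])) →
      e ≠ 0 ∧ e 0 = e 2 ∧ e 4 = e 2 ∧
        lam * e 1 = (c / 2 + d) * e 0 - 2 * d * e 1 + (-c / 2 + d) * e 2 ∧
        lam * e 2 = (c / 2 + d) * e 1 - 2 * d * e 2 + (-c / 2 + d) * e 3 ∧
        lam * e 3 = (c / 2 + d) * e 2 - 2 * d * e 3 + (-c / 2 + d) * e 4 := by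
    rintro lam e (⟨rfl, rfl⟩ | ⟨rfl, rfl⟩ | ⟨rfl, rfl⟩)
    · refine ⟨?_, by simp, by simp, by simp <;> ring, by simp <;> ring,
        by simp <;> ring⟩
      intro h
      have := congrFun h 0
      norm_num at this
    · refine ⟨?_, by simp, by simp, by simp <;> ring,
        by simp <;> ring, by simp <;> ring⟩
      intro h
      have h1 := congrFun h 1
      have h3 := congrFun h 3
      simp at h1 h3
      linarith
    · refine ⟨?_, by simp, by simp, by simp <;> ring, by simp <;> ring,
        by simp <;> ring⟩
      intro h
      have := congrFun h 0
      norm_num at this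
  refine ⟨?_, hpart2, ?_⟩
  · intro lam
    constructor
    · rintro ⟨v, hvne, h02, h42, e1, e2, e3⟩
      by_contra hne
      push_neg at hne
      obtain ⟨hl0, hl2, hl4⟩ := hne
      have h1 : (lam + 2*d) * v 1 = 2*d * v 2 := by
        linear_combination e1 + (c/2+d) * h02
      have h3 : (lam + 2*d) * v 3 = 2*d * v 2 := by
        linear_combination e3 + (-c/2+d) * h42
      have key : (lam * (lam + 4*d)) * v 2 = 0 := by
        linear_combination (lam + 2*d) * e2 + (c/2+d) * h1 + (-c/2+d) * h3
      have hfac : lam * (lam + 4*d) ≠ 0 := by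
        apply mul_ne_zero hl0
        intro h
        apply hl4
        linarith
      have hv2 : v 2 = 0 := by
        rcases mul_eq_zero.mp key with h | h
        · exact absurd h hfac
        · exact h
      have hl2' : lam + 2*d ≠ 0 := fun h => hl2 (by linarith)
      have hv1 : v 1 = 0 := by
        have h : (lam + 2*d) * v 1 = 0 := by rw [hv2] at h1; simpa using h1
        exact (mul_eq_zero.mp h).resolve_left hl2'
      have hv3 : v 3 = 0 := by
        have h : (lam + 2*d) * v 3 = 0 := by rw [hv2] at h3; simpa using h3
        exact (mul_eq_zero.mp h).resolve_left hl2'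
      apply hvne
      funext i
      fin_cases i <;> simp_all
    · rintro (rfl | rfl | rfl)
      · exact ⟨![1,1,1,1,1], (hpart2 0 _ (Or.inl ⟨rfl, rfl⟩)).1,
          (hpart2 0 _ (Or.inl ⟨rfl, rfl⟩)).2⟩
      · exact ⟨![0, c/2-d, 0, c/2+d, 0], (hpart2 _ _ (Or.inr (Or.inl ⟨rfl, rfl⟩))).1,
          (hpart2 _ _ (Or.inr (Or.inl ⟨rfl, rfl⟩))).2⟩
      · exact ⟨![1,-1,1,-1,1], (hpart2 _ _ (Or.inr (Or.inr ⟨rfl, rfl⟩))).1,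
          (hpart2 _ _ (Or.inr (Or.inr ⟨rfl, rfl⟩))).2⟩
  · rintro lam e v (⟨rfl, rfl⟩ | ⟨rfl, rfl⟩ | ⟨rfl, rfl⟩) ⟨h02, h42, e1, e2, e3⟩
    · -- lam = 0 : v = v2 • (1,1,1,1,1)
      have h1 : v 1 = v 2 := by
        have : (2*d) * v 1 = (2*d) * v 2 := by linear_combination e1 + (c/2+d) * h02
        exact mul_left_cancel₀ hd' this
      have h3 : v 3 = v 2 := by
        have : (2*d) * v 3 = (2*d) * v 2 := by linear_combination e3 + (-c/2+d) * h42
        exact mul_left_cancel₀ hd' this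
      refine ⟨v 2, ?_⟩
      funext i
      fin_cases i <;> simp [h02, h42, h1, h3]
    · -- lam = -2d
      have hv2 : v 2 = 0 := by
        have h1 : (2*d) * v 2 = 0 := by linear_combination -e1 - (c/2+d) * h02
        exact (mul_eq_zero.mp h1).resolve_left hd'
      have hv0 : v 0 = 0 := h02.trans hv2
      have hv4 : v 4 = 0 := h42.trans hv2
      have rel : (c/2+d) * v 1 + (-c/2+d) * v 3 = 0 := by
        linear_combination -e2
      have hden : (c/2+d)^2 + (-c/2+d)^2 > 0 := by nlinarith [sq_nonneg c, mul_pos hd hd]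
      set t : ℝ := ((c/2+d) * v 3 - (-c/2+d) * v 1) / ((c/2+d)^2 + (-c/2+d)^2) with ht
      have h1 : v 1 = t * (c/2 - d) := by
        rw [ht, div_mul_eq_mul_div, eq_comm, div_eq_iff (ne_of_gt hden)]
        linear_combination -(c/2+d) * rel
      have h3 : v 3 = t * (c/2 + d) := by
        rw [ht, div_mul_eq_mul_div, eq_comm, div_eq_iff (ne_of_gt hden)]
        linear_combination -(-c/2+d) * rel
      refine ⟨t, ?_⟩
      funext i
      fin_cases i
      · show v 0 = t * 0
        rw [hv0]; ring
      · show v 1 = t * (c/2 - d)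
        exact h1
      · show v 2 = t * 0
        rw [hv2]; ring
      · show v 3 = t * (c/2 + d)
        exact h3
      · show v 4 = t * 0
        rw [hv4]; ring
    · -- lam = -4d
      have h1 : v 1 = -v 2 := by
        have : (2*d) * v 1 = (2*d) * (-v 2) := by linear_combination -e1 - (c/2+d) * h02
        exact mul_left_cancel₀ hd' this
      have h3 : v 3 = -v 2 := by
        have : (2*d) * v 3 = (2*d) * (-v 2) := by linear_combination -e3 - (-c/2+d) * h42
        exact mul_left_cancel₀ hd' this
      refine ⟨v 2, ?_⟩
      funext i
      fin_cases i <;> simp [h02, h42, h1, h3] <;> ring
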